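/- Let Ω be a limit ordinal and let [0,Ω) denote the space of ordinals smaller than Ω with the order topology. Let f be a nonzero element of C₀([0,Ω)), the space of continuous real-valued functions on [0,Ω) vanishing at infinity, with supremum norm ‖·‖∞. Then the set {α < Ω : |f(α)| = ‖f‖∞} is nonempty and has a greatest element, and if α is this greatest element then f(α) − f(α+1) ≠ 0. -/

import Mathlib

/-- if `Ω` is a limit ordinal and `f` is a nonzero element of
`C₀([0,Ω))`, then the set `{α < Ω : |f(α)| = ‖f‖∞}` is nonempty with a greatest
element `α`, and `f(α) − f(α+1) ≠ 0`. -/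
theorem talagrand_operator_on_ordinal_space
    (Ω : Ordinal) (hΩ : Order.IsSuccLimit Ω)
    (f : ZeroAtInftyContinuousMap ↥(Set.Iio Ω) ℝ) (hf : f ≠ 0) :
    ∃ α : ↥(Set.Iio Ω),
      IsGreatest {β : ↥(Set.Iio Ω) | |f β| = ‖f‖} α ∧
      ∀ h : (↑α + 1 : Ordinal) < Ω, f α - f ⟨↑α + 1, h⟩ ≠ 0 := by
  haveI : Nonempty ↥(Set.Iio Ω) := ⟨⟨0, by simpa [Ordinal.bot_eq_zero] using hΩ.bot_lt⟩⟩
  haveI : ClosedIciTopology ↥(Set.Iio Ω) :=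
    ⟨fun {a} => by
      have : Set.Ici a = (Subtype.val : ↥(Set.Iio Ω) → Ordinal) ⁻¹' Set.Ici ↑a := by
        ext x; simp [Subtype.coe_le_coe]
      rw [this]
      exact isClosed_Ici.preimage continuous_subtype_val⟩
  have hM : (0:ℝ) < ‖f‖ := norm_pos_iff.mpr hf
  -- pointwise bound
  have hb : ∀ x, |f x| ≤ ‖f‖ := fun x => by
    calc |f x| = ‖f.toBCF x‖ := rfl
    _ ≤ ‖f.toBCF‖ := BoundedContinuousFunction.norm_coe_le_norm _ _
    _ = ‖f‖ := ZeroAtInftyContinuousMap.norm_toBCF_eq_norm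
  -- there is a point with |f x| > ‖f‖/2
  have hex : ∃ x, ‖f‖/2 < |f x| := by
    by_contra h
    push_neg at h
    have : ‖f‖ ≤ ‖f‖/2 := by
      rw [← ZeroAtInftyContinuousMap.norm_toBCF_eq_norm]
      exact BoundedContinuousFunction.norm_le_of_nonempty.mpr fun x => by
        simpa [Real.norm_eq_abs] using h x
    linarith
  obtain ⟨x₀, hx₀⟩ := hex
  -- compact set outside which |f| < ‖f‖/2
  have hz := zero_at_infty f
  have hball : {x : ↥(Set.Iio Ω) | |f x| < ‖f‖/2} ∈ Filter.cocompact _ := by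
    have : Metric.ball (0:ℝ) (‖f‖/2) ∈ nhds (0:ℝ) := Metric.ball_mem_nhds _ (by linarith)
    filter_upwards [hz this] with x hx
    simpa [Real.dist_eq] using hx
  obtain ⟨K, hKc, hK⟩ := Filter.mem_cocompact.mp hball
  have hcont : Continuous fun x : ↥(Set.Iio Ω) => |f x| := f.continuous.abs
  have hx₀K : x₀ ∈ K := by
    by_contra h
    have := hK h
    simp only [Set.mem_setOf_eq] at this
    linarith
  obtain ⟨a, haK, ha⟩ := hKc.exists_isMaxOn ⟨x₀, hx₀K⟩ hcont.continuousOn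
  -- a attains the norm
  have haM : |f a| = ‖f‖ := by
    refine le_antisymm (hb a) ?_
    have h2 : ‖f‖/2 ≤ |f a| := le_trans hx₀.le (ha hx₀K)
    have : ∀ x, |f x| ≤ |f a| := fun x => by
      by_cases hx : x ∈ K
      · exact ha hx
      · have := hK hx; simp only [Set.mem_setOf_eq] at this; linarith
    rw [← ZeroAtInftyContinuousMap.norm_toBCF_eq_norm]
    exact BoundedContinuousFunction.norm_le_of_nonempty.mpr fun x => by
      simpa [Real.norm_eq_abs] using this x
  -- the level set is compact
  have hScl : IsClosed {β : ↥(Set.Iio Ω) | |f β| = ‖f‖} :=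
    isClosed_eq hcont continuous_const
  have hSsub : {β : ↥(Set.Iio Ω) | |f β| = ‖f‖} ⊆ K := fun x hx => by
    by_contra h
    have := hK h
    simp only [Set.mem_setOf_eq] at this hx
    linarith
  have hScomp : IsCompact {β : ↥(Set.Iio Ω) | |f β| = ‖f‖} :=
    hKc.of_isClosed_subset hScl hSsub
  obtain ⟨α, hαg⟩ := hScomp.exists_isGreatest ⟨a, haM⟩
  refine ⟨α, hαg, fun h hne => ?_⟩
  have heq : f ⟨↑α + 1, h⟩ = f α := by linarith [sub_eq_zero.mp hne]
  have hmem : (⟨↑α + 1, h⟩ : ↥(Set.Iio Ω)) ∈ {β : ↥(Set.Iio Ω) | |f β| = ‖f‖} := by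
    simp only [Set.mem_setOf_eq, heq]
    exact hαg.1
  have hle := hαg.2 hmem
  have : (↑α : Ordinal) + 1 ≤ ↑α := hle
  exact absurd this (by simp [Order.add_one_le_iff])
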